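/- Let G be a graph with Godsil-McKay switching set X and switched graph G', and let H be any graph. Then the sets X_i = {i} × X for i ∈ V(H), together with the remaining vertices Y, form a Godsil-McKay switching partition of the tensor product H × G, and switching with respect to this partition yields H × G'. In particular, H × G and H × G' are cospectral. -/

import Mathlib

open Finset
open scoped Classical

variable {V : Type*}

/-- `y` has exactly half of the vertices of `X` as neighbours in `G`. -/
def halfIn (G : SimpleGraph V) (X : Finset V) (y : V) : Prop :=
  2 * (X.filter (G.Adj y)).card = X.card

/-- A Godsil-McKay switching set: `X` induces a regular subgraph, and every vertex
outside `X` has `0`, `|X|/2` or `|X|` neighbours in `X`. -/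
def IsGMSwitchingSet (G : SimpleGraph V) (X : Finset V) : Prop :=
  (∃ k, ∀ x ∈ X, (X.filter (G.Adj x)).card = k) ∧
    ∀ y ∉ X, (X.filter (G.Adj y)).card = 0 ∨ halfIn G X y ∨
      (X.filter (G.Adj y)).card = X.card

/-- The graph obtained from `G` by Godsil-McKay switching with respect to `X`:
for each vertex `y ∉ X` having exactly `|X|/2` neighbours in `X`, the edges from `y`
to `X` are replaced by the edges from `y` to the other `|X|/2` vertices of `X`. -/
noncomputable def GMswitch (G : SimpleGraph V) (X : Finset V) : SimpleGraph V where
  Adj u v :=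
    if u ∈ X ↔ v ∈ X then G.Adj u v
    else if halfIn G X (if u ∈ X then v else u) then ¬ G.Adj u v else G.Adj u v
  symm := by
    constructor
    intro u v h
    by_cases hm : (u ∈ X ↔ v ∈ X)
    · rw [if_pos hm] at h
      rw [if_pos hm.symm]
      exact h.symm
    · have hm' : ¬ (v ∈ X ↔ u ∈ X) := fun hh => hm hh.symm
      rw [if_neg hm] at h
      rw [if_neg hm']
      have he : (if v ∈ X then u else v) = (if u ∈ X then v else u) := by
        by_cases hu : u ∈ X <;> by_cases hv : v ∈ X <;> simp [hu, hv] at hm ⊢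
      rw [he]
      by_cases hc : halfIn G X (if u ∈ X then v else u)
      · rw [if_pos hc] at h ⊢
        exact fun ha => h ha.symm
      · rw [if_neg hc] at h ⊢
        exact h.symm
  loopless := by
    constructor
    intro u h
    rw [if_pos Iff.rfl] at h
    exact G.loopless.irrefl u h

/-- `lam G x y` is the number of common neighbours of `x` and `y` in `G`. -/
noncomputable def lam [Fintype V] (G : SimpleGraph V) (x y : V) : ℕ :=
  (univ.filter fun z => G.Adj x z ∧ G.Adj y z).card


/-- The tensor product of graphs: `(i,x)` is adjacent to `(j,y)` iff `i ~ j` and `x ~ y`. -/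
def tensorProd {W V : Type*} (H : SimpleGraph W) (G : SimpleGraph V) :
    SimpleGraph (W × V) where
  Adj p q := H.Adj p.1 q.1 ∧ G.Adj p.2 q.2
  symm := ⟨fun _ _ h => ⟨h.1.symm, h.2.symm⟩⟩
  loopless := ⟨fun p h => H.loopless.irrefl p.1 h.1⟩

/-- The copy `{i} × X` of `X` in the product. -/
def copyPart {W V : Type*} [DecidableEq W] [DecidableEq V]
    (X : Finset V) (i : W) : Finset (W × V) := {i} ×ˢ X


section GMAux

noncomputable def gmP [Fintype V] [DecidableEq V] (X : Finset V) : Matrix V V ℝ :=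
  fun u v => if u ∈ X ∧ v ∈ X then 1 else 0

noncomputable def gmS [Fintype V] [DecidableEq V] (X : Finset V) : Matrix V V ℝ :=
  Matrix.diagonal (fun u => if u ∈ X then 1 else -1)

noncomputable def gmQ [Fintype V] [DecidableEq V] (X : Finset V) : Matrix V V ℝ :=
  ((2 : ℝ) / X.card) • gmP X - gmS X

variable [Fintype V] [DecidableEq V] (G : SimpleGraph V) (X : Finset V)

lemma gmP_mul_gmP : gmP X * gmP X = (X.card : ℝ) • gmP X := by
  ext u v
  simp only [Matrix.mul_apply, gmP, Matrix.smul_apply, smul_eq_mul]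
  by_cases hu : u ∈ X <;> by_cases hv : v ∈ X <;>
    simp [hu, hv, Finset.sum_ite_mem, Finset.univ_inter]

lemma gmS_mul_gmS : gmS X * gmS X = 1 := by
  rw [gmS, Matrix.diagonal_mul_diagonal]
  have : (fun i => (if i ∈ X then (1:ℝ) else -1) * if i ∈ X then 1 else -1) = fun _ => (1:ℝ) := by
    funext u; by_cases h : u ∈ X <;> simp [h]
  rw [this, Matrix.diagonal_one]

lemma gmP_mul_gmS : gmP X * gmS X = gmP X := by
  ext u v
  rw [gmS, Matrix.mul_diagonal]
  by_cases hv : v ∈ X <;> simp [gmP, hv]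

lemma gmS_mul_gmP : gmS X * gmP X = gmP X := by
  ext u v
  rw [gmS, Matrix.diagonal_mul]
  by_cases hu : u ∈ X <;> simp [gmP, hu]

lemma gmQ_mul_gmQ : gmQ X * gmQ X = 1 := by
  rcases eq_or_ne X.card 0 with h | h
  · have hP : gmP X = 0 := by
      ext u v
      have := Finset.card_eq_zero.mp h
      simp [gmP, this]
    simp [gmQ, hP, Matrix.sub_mul, Matrix.mul_sub, gmS_mul_gmS]
  · have hm : (X.card : ℝ) ≠ 0 := Nat.cast_ne_zero.mpr h
    rw [gmQ, Matrix.sub_mul, Matrix.mul_sub, Matrix.mul_sub]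
    rw [Matrix.smul_mul, Matrix.mul_smul, Matrix.smul_mul, Matrix.mul_smul, gmP_mul_gmP,
      gmP_mul_gmS, gmS_mul_gmP, gmS_mul_gmS]
    rw [smul_smul, smul_smul]
    have : 2 / (X.card : ℝ) * (2 / X.card) * X.card = 2 / X.card + 2 / X.card := by
      field_simp; ring
    rw [this, add_smul]
    abel

lemma gmP_mul_adj (u v : V) :
    (gmP X * G.adjMatrix ℝ) u v = if u ∈ X then ((X.filter (G.Adj v)).card : ℝ) else 0 := by
  rw [Matrix.mul_apply]
  by_cases hu : u ∈ X
  · simp only [gmP, hu, true_and, if_pos, SimpleGraph.adjMatrix_apply]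
    rw [← Finset.sum_filter_add_sum_filter_not Finset.univ (· ∈ X)]
    have h2 : ∑ w ∈ Finset.univ.filter (· ∉ X),
        (if w ∈ X then (1:ℝ) else 0) * (if G.Adj w v then 1 else 0) = 0 := by
      apply Finset.sum_eq_zero
      intro w hw
      simp only [Finset.mem_filter] at hw
      simp [hw.2]
    rw [h2, add_zero]
    have h1 : ∀ w ∈ Finset.univ.filter (· ∈ X),
        (if w ∈ X then (1:ℝ) else 0) * (if G.Adj w v then 1 else 0)
          = if G.Adj v w then 1 else 0 := by
      intro w hw
      simp only [Finset.mem_filter] at hw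
      rw [if_pos hw.2, one_mul, G.adj_comm]
    rw [Finset.sum_congr rfl h1]
    have : Finset.univ.filter (· ∈ X) = X := by ext w; simp
    rw [this, Finset.sum_boole]
  · simp only [gmP, hu, false_and, if_neg (fun h : False => h), if_false]
    simp

lemma adj_mul_gmP (u v : V) :
    (G.adjMatrix ℝ * gmP X) u v = if v ∈ X then ((X.filter (G.Adj u)).card : ℝ) else 0 := by
  rw [Matrix.mul_apply]
  by_cases hv : v ∈ X
  · simp only [gmP, hv, and_true, SimpleGraph.adjMatrix_apply, if_pos]
    have h : ∀ w, (if G.Adj u w then (1:ℝ) else 0) * (if w ∈ X then 1 else 0)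
        = if w ∈ X then (if G.Adj u w then (1:ℝ) else 0) else 0 := by
      intro w; by_cases h1 : w ∈ X <;> by_cases h2 : G.Adj u w <;> simp [h1, h2]
    simp only [h]
    rw [Finset.sum_ite_mem, Finset.univ_inter, Finset.sum_boole]
  · simp [gmP, hv]

lemma gmP_adj_gmP (k : ℕ) (hk : ∀ x ∈ X, (X.filter (G.Adj x)).card = k) (u v : V) :
    (gmP X * G.adjMatrix ℝ * gmP X) u v
      = if u ∈ X ∧ v ∈ X then ((X.card : ℝ) * k) else 0 := by
  rw [Matrix.mul_apply]
  by_cases hu : u ∈ X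
  · by_cases hv : v ∈ X
    · rw [if_pos ⟨hu, hv⟩]
      have h : ∀ w, (gmP X * G.adjMatrix ℝ) u w * gmP X w v
          = if w ∈ X then (k : ℝ) else 0 := by
        intro w
        rw [gmP_mul_adj, if_pos hu]
        by_cases hw : w ∈ X
        · simp [gmP, hw, hv, hk w hw]
        · simp [gmP, hw]
      simp only [h]
      rw [Finset.sum_ite_mem, Finset.univ_inter, Finset.sum_const, nsmul_eq_mul]
    · rw [if_neg (fun h => hv h.2)]
      apply Finset.sum_eq_zero
      intro w _
      simp [gmP, hv]
  · rw [if_neg (fun h => hu h.1)]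
    apply Finset.sum_eq_zero
    intro w _
    rw [gmP_mul_adj, if_neg hu, zero_mul]

lemma gmQ_conj (hX : IsGMSwitchingSet G X) :
    gmQ X * G.adjMatrix ℝ * gmQ X = (GMswitch G X).adjMatrix ℝ := by
  classical
  obtain ⟨⟨k, hk⟩, hy⟩ := hX
  set A := G.adjMatrix ℝ with hA
  set c : ℝ := 2 / X.card with hc
  have expand : gmQ X * A * gmQ X
      = c • (c • (gmP X * A * gmP X) - gmP X * A * gmS X)
        - (c • (gmS X * A * gmP X) - gmS X * A * gmS X) := by
    rw [gmQ, Matrix.sub_mul, Matrix.smul_mul, Matrix.sub_mul, Matrix.smul_mul,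
      Matrix.mul_sub, Matrix.mul_sub, Matrix.mul_smul, Matrix.mul_smul]
  ext u v
  rw [expand]
  have hPAS : (gmP X * A * gmS X) u v
      = (gmP X * A) u v * (if v ∈ X then 1 else -1) := by
    rw [gmS, Matrix.mul_diagonal]
  have hSAP : (gmS X * A * gmP X) u v
      = (if u ∈ X then 1 else -1) * (A * gmP X) u v := by
    rw [Matrix.mul_assoc, gmS, Matrix.diagonal_mul]
  have hSAS : (gmS X * A * gmS X) u v
      = (if u ∈ X then 1 else -1) * A u v * (if v ∈ X then 1 else -1) := by
    rw [gmS, Matrix.mul_diagonal, Matrix.diagonal_mul]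
  rw [Matrix.sub_apply, Matrix.smul_apply, Matrix.sub_apply, Matrix.sub_apply,
    Matrix.smul_apply, Matrix.smul_apply, hPAS, hSAP, hSAS,
    gmP_adj_gmP G X k hk, gmP_mul_adj, adj_mul_gmP, smul_eq_mul, smul_eq_mul,
    smul_eq_mul]
  by_cases hu : u ∈ X <;> by_cases hv : v ∈ X
  · -- both in X
    have hm : (X.card : ℝ) ≠ 0 := Nat.cast_ne_zero.mpr (Finset.card_ne_zero_of_mem hu)
    have hadj : (GMswitch G X).adjMatrix ℝ u v = A u v := by
      have : (GMswitch G X).Adj u v ↔ G.Adj u v := by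
        simp [GMswitch, hu, hv]
      simp [hA, SimpleGraph.adjMatrix_apply, this]
    rw [hadj]
    simp only [hu, hv, and_self, ite_true]
    rw [hk u hu, hk v hv, hc]
    field_simp
    ring
  · -- u ∈ X, v ∉ X
    have hm : (X.card : ℝ) ≠ 0 := Nat.cast_ne_zero.mpr (Finset.card_ne_zero_of_mem hu)
    have hiff : ¬ (u ∈ X ↔ v ∈ X) := by simp [hu, hv]
    have hadj : (GMswitch G X).adjMatrix ℝ u v
        = if halfIn G X v then (if G.Adj u v then (0:ℝ) else 1)
          else (if G.Adj u v then 1 else 0) := by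
      have h1 : (GMswitch G X).Adj u v ↔
          (if halfIn G X v then ¬ G.Adj u v else G.Adj u v) := by
        rw [GMswitch]
        simp only [SimpleGraph.Adj]
        rw [if_neg hiff, if_pos hu]
      rw [SimpleGraph.adjMatrix_apply]
      by_cases hh : halfIn G X v <;> by_cases ha : G.Adj u v <;>
        simp [h1, hh, ha]
    rw [hadj]
    simp only [hu, hv, and_false, and_true, ite_true, ite_false]
    rcases hy v hv with h0 | hh | hall
    · -- no neighbours in X
      have hA0 : A u v = 0 := by
        rw [hA, SimpleGraph.adjMatrix_apply, if_neg]
        intro ha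
        have : u ∈ X.filter (G.Adj v) := Finset.mem_filter.mpr ⟨hu, ha.symm⟩
        rw [Finset.card_eq_zero.mp h0] at this
        exact absurd this (Finset.notMem_empty u)
      have hnh : ¬ halfIn G X v := by
        intro hhh
        rw [halfIn, h0, mul_zero] at hhh
        exact hm (Nat.cast_eq_zero.mpr hhh.symm)
      have hGA : ¬ G.Adj u v := by
        intro ha
        rw [hA, SimpleGraph.adjMatrix_apply, if_pos ha] at hA0
        norm_num at hA0
      rw [if_neg hnh, if_neg hGA, h0, hA0]
      ring
    · -- half
      have hd : (2 : ℝ) * ((X.filter (G.Adj v)).card : ℝ) = X.card := by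
        exact_mod_cast congrArg (Nat.cast : ℕ → ℝ) hh
      have hcd : c * ((X.filter (G.Adj v)).card : ℝ) = 1 := by
        rw [hc]
        field_simp
        linarith [hd]
      rw [if_pos hh]
      by_cases ha : G.Adj u v
      · rw [if_pos ha]
        have : A u v = 1 := by rw [hA, SimpleGraph.adjMatrix_apply, if_pos ha]
        rw [this]
        nlinarith [hcd]
      · rw [if_neg ha]
        have : A u v = 0 := by rw [hA, SimpleGraph.adjMatrix_apply, if_neg ha]
        rw [this]
        nlinarith [hcd]
    · -- all of X
      have hfull : X.filter (G.Adj v) = X :=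
        Finset.eq_of_subset_of_card_le (Finset.filter_subset _ _) (le_of_eq hall.symm)
      have hGA : G.Adj u v := by
        have : u ∈ X.filter (G.Adj v) := hfull.symm ▸ hu
        exact (Finset.mem_filter.mp this).2.symm
      have hnh : ¬ halfIn G X v := by
        intro hhh
        rw [halfIn, hall] at hhh
        have : X.card = 0 := by omega
        exact hm (Nat.cast_eq_zero.mpr this)
      have hA1 : A u v = 1 := by rw [hA, SimpleGraph.adjMatrix_apply, if_pos hGA]
      rw [if_neg hnh, if_pos hGA, hall, hA1, hc]
      field_simp
      ring
  · -- u ∉ X, v ∈ X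
    have hm : (X.card : ℝ) ≠ 0 := Nat.cast_ne_zero.mpr (Finset.card_ne_zero_of_mem hv)
    have hiff : ¬ (u ∈ X ↔ v ∈ X) := by simp [hu, hv]
    have hadj : (GMswitch G X).adjMatrix ℝ u v
        = if halfIn G X u then (if G.Adj u v then (0:ℝ) else 1)
          else (if G.Adj u v then 1 else 0) := by
      have h1 : (GMswitch G X).Adj u v ↔
          (if halfIn G X u then ¬ G.Adj u v else G.Adj u v) := by
        rw [GMswitch]
        simp only [SimpleGraph.Adj]
        rw [if_neg hiff, if_neg hu]
      rw [SimpleGraph.adjMatrix_apply]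
      by_cases hh : halfIn G X u <;> by_cases ha : G.Adj u v <;>
        simp [h1, hh, ha]
    rw [hadj]
    simp only [hu, hv, false_and, and_true, ite_true, ite_false]
    rcases hy u hu with h0 | hh | hall
    · have hGA : ¬ G.Adj u v := by
        intro ha
        have : v ∈ X.filter (G.Adj u) := Finset.mem_filter.mpr ⟨hv, ha⟩
        rw [Finset.card_eq_zero.mp h0] at this
        exact absurd this (Finset.notMem_empty v)
      have hA0 : A u v = 0 := by rw [hA, SimpleGraph.adjMatrix_apply, if_neg hGA]
      have hnh : ¬ halfIn G X u := by
        intro hhh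
        rw [halfIn, h0, mul_zero] at hhh
        exact hm (Nat.cast_eq_zero.mpr hhh.symm)
      rw [if_neg hnh, if_neg hGA, h0, hA0]
      ring
    · have hd : (2 : ℝ) * ((X.filter (G.Adj u)).card : ℝ) = X.card := by
        exact_mod_cast congrArg (Nat.cast : ℕ → ℝ) hh
      have hcd : c * ((X.filter (G.Adj u)).card : ℝ) = 1 := by
        rw [hc]
        field_simp
        linarith [hd]
      rw [if_pos hh]
      by_cases ha : G.Adj u v
      · rw [if_pos ha]
        have : A u v = 1 := by rw [hA, SimpleGraph.adjMatrix_apply, if_pos ha]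
        rw [this]
        nlinarith [hcd]
      · rw [if_neg ha]
        have : A u v = 0 := by rw [hA, SimpleGraph.adjMatrix_apply, if_neg ha]
        rw [this]
        nlinarith [hcd]
    · have hfull : X.filter (G.Adj u) = X :=
        Finset.eq_of_subset_of_card_le (Finset.filter_subset _ _) (le_of_eq hall.symm)
      have hGA : G.Adj u v := by
        have : v ∈ X.filter (G.Adj u) := hfull.symm ▸ hv
        exact (Finset.mem_filter.mp this).2
      have hnh : ¬ halfIn G X u := by
        intro hhh
        rw [halfIn, hall] at hhh
        have : X.card = 0 := by omega
        exact hm (Nat.cast_eq_zero.mpr this)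
      have hA1 : A u v = 1 := by rw [hA, SimpleGraph.adjMatrix_apply, if_pos hGA]
      rw [if_neg hnh, if_pos hGA, hall, hA1, hc]
      field_simp
      ring
  · -- both outside
    have hadj : (GMswitch G X).adjMatrix ℝ u v = A u v := by
      have : (GMswitch G X).Adj u v ↔ G.Adj u v := by
        simp [GMswitch, hu, hv]
      simp [hA, SimpleGraph.adjMatrix_apply, this]
    rw [hadj]
    simp only [hu, hv, false_and, and_false, ite_true, ite_false]
    ring


end GMAux

theorem charpoly_conj_inv {n R : Type*} [Fintype n] [DecidableEq n] [CommRing R]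
    (Q M : Matrix n n R) (hQ : Q * Q = 1) :
    (Q * M * Q).charpoly = M.charpoly := by
  classical
  set Qc : Matrix n n (Polynomial R) := Q.map Polynomial.C with hQc
  have hQc2 : Qc * Qc = 1 := by
    rw [hQc, ← Matrix.map_mul, hQ]
    simp
  have key : Matrix.charmatrix (Q * M * Q) = Qc * Matrix.charmatrix M * Qc := by
    rw [Matrix.charmatrix]
    rw [Matrix.charmatrix]
    simp only [RingHom.mapMatrix_apply]
    rw [Matrix.map_mul, Matrix.map_mul]
    rw [Matrix.mul_sub, Matrix.sub_mul]
    congr 1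
    · have hcomm : Qc * (Matrix.scalar n) Polynomial.X
          = (Matrix.scalar n) Polynomial.X * Qc :=
        ((Matrix.scalar_commute Polynomial.X (fun r' => Commute.all _ r') Qc)).symm
      rw [hcomm, Matrix.mul_assoc, hQc2, Matrix.mul_one]
  rw [Matrix.charpoly, Matrix.charpoly, key, Matrix.det_mul, Matrix.det_mul]
  have h2 : Qc.det * Matrix.det (Matrix.charmatrix M) * Qc.det
      = (Qc * Qc).det * Matrix.det (Matrix.charmatrix M) := by
    rw [Matrix.det_mul]; ring
  rw [h2, hQc2, Matrix.det_one, one_mul]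

lemma tensorProd_adj {W V : Type*} (H : SimpleGraph W) (G : SimpleGraph V) (p q : W × V) :
    (tensorProd H G).Adj p q ↔ H.Adj p.1 q.1 ∧ G.Adj p.2 q.2 := Iff.rfl

lemma GMswitch_adj (G : SimpleGraph V) (X : Finset V) (u v : V) :
    (GMswitch G X).Adj u v ↔
      (if u ∈ X ↔ v ∈ X then G.Adj u v
       else if halfIn G X (if u ∈ X then v else u) then ¬ G.Adj u v else G.Adj u v) := Iff.rfl

lemma mem_copyPart {W V : Type*} [DecidableEq W] [DecidableEq V]
    {X : Finset V} {i : W} {q : W × V} :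
    q ∈ copyPart X i ↔ q.1 = i ∧ q.2 ∈ X := by
  rw [copyPart, Finset.mem_product, Finset.mem_singleton]

lemma card_copyPart {W V : Type*} [DecidableEq W] [DecidableEq V]
    (X : Finset V) (i : W) : (copyPart X i).card = X.card := by
  simp [copyPart]

lemma filter_copyPart {W V : Type*} [Fintype W] [Fintype V] [DecidableEq W] [DecidableEq V]
    (H : SimpleGraph W) (G : SimpleGraph V) (X : Finset V) (q : W × V) (j : W) :
    ((copyPart X j).filter ((tensorProd H G).Adj q)).card
      = if H.Adj q.1 j then (X.filter (G.Adj q.2)).card else 0 := by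
  by_cases h : H.Adj q.1 j
  · rw [if_pos h]
    have hset : (copyPart X j).filter ((tensorProd H G).Adj q)
        = ({j} : Finset W) ×ˢ (X.filter (G.Adj q.2)) := by
      ext p
      simp only [Finset.mem_filter, mem_copyPart, Finset.mem_product,
        Finset.mem_singleton, tensorProd_adj]
      constructor
      · rintro ⟨⟨h1, h2⟩, _, h4⟩
        exact ⟨h1, h2, h4⟩
      · rintro ⟨h1, h2, h3⟩
        exact ⟨⟨h1, h2⟩, h1 ▸ h, h3⟩
    rw [hset, Finset.card_product, Finset.card_singleton, one_mul]
  · rw [if_neg h, Finset.card_eq_zero, Finset.eq_empty_iff_forall_notMem]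
    intro p hp
    rw [Finset.mem_filter, mem_copyPart, tensorProd_adj] at hp
    exact h (hp.1.1 ▸ hp.2.1)

lemma adjMatrix_tensorProd {W V : Type*} [Fintype W] [Fintype V]
    (H : SimpleGraph W) (G : SimpleGraph V) :
    (tensorProd H G).adjMatrix ℝ
      = Matrix.kroneckerMap (· * ·) (H.adjMatrix ℝ) (G.adjMatrix ℝ) := by
  ext p q
  rw [Matrix.kroneckerMap_apply, SimpleGraph.adjMatrix_apply,
    SimpleGraph.adjMatrix_apply, SimpleGraph.adjMatrix_apply]
  by_cases h1 : H.Adj p.1 q.1 <;> by_cases h2 : G.Adj p.2 q.2 <;>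
    simp [tensorProd_adj, h1, h2]

/-- The sets `X_i = {i} × X`, together with the remaining vertices, form a Godsil-McKay
switching partition of the tensor product `H × G`, switching with respect to it yields
`H × G'`, and in particular `H × G` and `H × G'` are cospectral. -/
theorem tensorProd_switching_partition
    {W V : Type*} [Fintype W] [Fintype V] [DecidableEq W] [DecidableEq V]
    (G : SimpleGraph V) (X : Finset V) (hX : IsGMSwitchingSet G X)
    (H : SimpleGraph W) :
    (∀ i j : W, ∃ k, ∀ p ∈ copyPart X i,
        ((copyPart X j).filter ((tensorProd H G).Adj p)).card = k) ∧
    (∀ q : W × V, (∀ i : W, q ∉ copyPart X i) → ∀ i : W,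
        ((copyPart X i).filter ((tensorProd H G).Adj q)).card = 0 ∨
          2 * ((copyPart X i).filter ((tensorProd H G).Adj q)).card =
            (copyPart X i).card ∨
          ((copyPart X i).filter ((tensorProd H G).Adj q)).card =
            (copyPart X i).card) ∧
    (∀ u v : W × V, (∃ i, u ∈ copyPart X i) → (∃ j, v ∈ copyPart X j) →
        ((tensorProd H (GMswitch G X)).Adj u v ↔ (tensorProd H G).Adj u v)) ∧
    (∀ u v : W × V, (∀ i, u ∉ copyPart X i) → (∀ i, v ∉ copyPart X i) →
        ((tensorProd H (GMswitch G X)).Adj u v ↔ (tensorProd H G).Adj u v)) ∧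
    (∀ i : W, ∀ p ∈ copyPart X i, ∀ q : W × V, (∀ j : W, q ∉ copyPart X j) →
        if 2 * ((copyPart X i).filter ((tensorProd H G).Adj q)).card =
            (copyPart X i).card
        then ((tensorProd H (GMswitch G X)).Adj p q ↔ ¬ (tensorProd H G).Adj p q)
        else ((tensorProd H (GMswitch G X)).Adj p q ↔ (tensorProd H G).Adj p q)) ∧
    ((tensorProd H G).adjMatrix ℝ).charpoly =
      ((tensorProd H (GMswitch G X)).adjMatrix ℝ).charpoly := by
    classical
  constructor
  · -- part 1: regularity across parts
    obtain ⟨⟨k0, hk0⟩, _⟩ := hX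
    intro i j
    refine ⟨if H.Adj i j then k0 else 0, ?_⟩
    intro p hp
    rw [mem_copyPart] at hp
    rw [filter_copyPart, hp.1]
    by_cases h : H.Adj i j
    · rw [if_pos h, if_pos h, hk0 p.2 hp.2]
    · rw [if_neg h, if_neg h]
  refine ⟨?_, ?_, ?_, ?_, ?_⟩
  · -- part 2: vertices outside
    obtain ⟨_, hy0⟩ := hX
    intro q hq i
    have hq2 : q.2 ∉ X := fun h => hq q.1 (mem_copyPart.mpr ⟨rfl, h⟩)
    rw [filter_copyPart, card_copyPart]
    by_cases h : H.Adj q.1 i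
    · rw [if_pos h]
      rcases hy0 q.2 hq2 with h0 | hh | hall
      · exact Or.inl h0
      · exact Or.inr (Or.inl hh)
      · exact Or.inr (Or.inr hall)
    · rw [if_neg h]
      exact Or.inl rfl
  · -- part 3: both inside copies
    rintro u v ⟨i, hu⟩ ⟨j, hv⟩
    rw [mem_copyPart] at hu hv
    rw [tensorProd_adj, tensorProd_adj, GMswitch_adj,
      if_pos (iff_of_true hu.2 hv.2)]
  · -- part 4: both outside
    intro u v hu hv
    have hu2 : u.2 ∉ X := fun h => hu u.1 (mem_copyPart.mpr ⟨rfl, h⟩)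
    have hv2 : v.2 ∉ X := fun h => hv v.1 (mem_copyPart.mpr ⟨rfl, h⟩)
    rw [tensorProd_adj, tensorProd_adj, GMswitch_adj,
      if_pos (iff_of_false hu2 hv2)]
  · -- part 5: switching behaviour between X_i and outside
    intro i p hp q hq
    rw [mem_copyPart] at hp
    have hq2 : q.2 ∉ X := fun h => hq q.1 (mem_copyPart.mpr ⟨rfl, h⟩)
    have hXne : X.card ≠ 0 := Finset.card_ne_zero_of_mem hp.2
    have hiff : ¬ (p.2 ∈ X ↔ q.2 ∈ X) := by simp [hp.2, hq2]
    rw [filter_copyPart, card_copyPart]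
    by_cases hHa : H.Adj q.1 i
    · rw [if_pos hHa]
      have hH : H.Adj p.1 q.1 := by rw [hp.1]; exact hHa.symm
      by_cases hhalf : halfIn G X q.2
      · rw [if_pos (show 2 * (X.filter (G.Adj q.2)).card = X.card from hhalf)]
        rw [tensorProd_adj, tensorProd_adj, GMswitch_adj, if_neg hiff,
          if_pos hp.2, if_pos hhalf]
        constructor
        · rintro ⟨_, h2⟩ ⟨_, h4⟩
          exact h2 h4
        · intro h
          exact ⟨hH, fun hg => h ⟨hH, hg⟩⟩
      · rw [if_neg (show ¬ (2 * (X.filter (G.Adj q.2)).card = X.card) from hhalf)]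
        rw [tensorProd_adj, tensorProd_adj, GMswitch_adj, if_neg hiff,
          if_pos hp.2, if_neg hhalf]
    · rw [if_neg hHa]
      have hc : ¬ (2 * 0 = X.card) := by omega
      rw [if_neg hc]
      have hH : ¬ H.Adj p.1 q.1 := fun h => hHa (hp.1 ▸ h.symm)
      rw [tensorProd_adj, tensorProd_adj, GMswitch_adj, if_neg hiff,
        if_pos hp.2]
      constructor
      · rintro ⟨h1, _⟩
        exact absurd h1 hH
      · rintro ⟨h1, _⟩
        exact absurd h1 hH
  · -- part 6: cospectrality
    have hconj := gmQ_conj G X hX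
    have hQQ := gmQ_mul_gmQ (X := X)
    rw [adjMatrix_tensorProd, adjMatrix_tensorProd]
    have hQW : Matrix.kroneckerMap (· * ·) (1 : Matrix W W ℝ) (gmQ X)
        * Matrix.kroneckerMap (· * ·) (1 : Matrix W W ℝ) (gmQ X) = 1 := by
      rw [← Matrix.mul_kronecker_mul, Matrix.one_mul, hQQ, Matrix.one_kronecker_one]
    have hswap : Matrix.kroneckerMap (· * ·) (1 : Matrix W W ℝ) (gmQ X)
        * Matrix.kroneckerMap (· * ·) (H.adjMatrix ℝ) (G.adjMatrix ℝ)
        * Matrix.kroneckerMap (· * ·) (1 : Matrix W W ℝ) (gmQ X)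
        = Matrix.kroneckerMap (· * ·) (H.adjMatrix ℝ) ((GMswitch G X).adjMatrix ℝ) := by
      rw [← Matrix.mul_kronecker_mul, ← Matrix.mul_kronecker_mul,
        Matrix.one_mul, Matrix.mul_one, hconj]
    rw [← hswap, charpoly_conj_inv _ _ hQW]
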